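/- There is no (96,20,4)-difference set in the cyclic group ℤ/96ℤ. -/

import Mathlib

open Finset Polynomial

namespace DS96


-- assume p1 lemmas available; restate here for testing
lemma sum_zmod {M : Type*} [AddCommMonoid M] (N : ℕ) [NeZero N] (F : ZMod N → M) :
    ∑ c : ZMod N, F c = ∑ i ∈ range N, F (i : ZMod N) :=
  Finset.sum_nbij' (fun c => c.val) (fun i => (i : ZMod N))
    (fun c _ => mem_range.mpr (ZMod.val_lt c))
    (fun _ _ => mem_univ _)
    (fun c _ => ZMod.natCast_rightInverse c)
    (fun i hi => ZMod.val_cast_of_lt (mem_range.mp hi))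
    (fun c _ => by rw [ZMod.natCast_rightInverse c])

lemma reflect_sum {R : Type*} [Semiring R] {ι : Type*} (s : Finset ι) (f : ι → R[X]) (N : ℕ) :
    reflect N (∑ i ∈ s, f i) = ∑ i ∈ s, reflect N (f i) := by
  induction s using Finset.cons_induction with
  | empty => simp
  | cons a s ha ih => rw [Finset.sum_cons, Finset.sum_cons, reflect_add, ih]

lemma natDegree_X_add_one_pow_le {R : Type*} [Semiring R] (v : ℕ) :
    (((X : R[X]) + 1) ^ v).natDegree ≤ v := by
  refine (natDegree_pow_le).trans ?_
  have : ((X : R[X]) + 1).natDegree ≤ 1 := by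
    refine natDegree_add_le_of_degree_le (natDegree_X_le) (by simp)
  nlinarith [this]

lemma reflect_one_X_add_one {R : Type*} [Semiring R] :
    reflect 1 ((X : R[X]) + 1) = X + 1 := by
  have h1 : ((X : R[X]) + 1) = C 1 * X ^ 1 + C 1 * X ^ 0 := by simp
  rw [h1, reflect_add, reflect_C_mul_X_pow, reflect_C_mul_X_pow]
  simp [revAt]
  show (X : R[X]) ^ (1 - 1) + X ^ (1 - 0) = X + 1
  rw [Nat.sub_self, Nat.sub_zero, pow_zero, pow_one]
  exact add_comm (1 : R[X]) X

lemma reflect_X_add_one_pow {R : Type*} [CommSemiring R] (v : ℕ) :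
    reflect v (((X : R[X]) + 1) ^ v) = (X + 1) ^ v := by
  induction v with
  | zero =>
    have : ((X : R[X]) + 1) ^ 0 = C 1 * X ^ 0 := by simp
    rw [this, reflect_C_mul_X_pow]
    simp [revAt]
  | succ v ih =>
    have h1 : ((X : R[X]) + 1) ^ (v + 1) = (X + 1) ^ v * (X + 1) := by ring
    rw [h1, reflect_mul _ _ (natDegree_X_add_one_pow_le v)
      (natDegree_add_le_of_degree_le (natDegree_X_le) (by simp)), ih,
      reflect_one_X_add_one]


section parity
variable (half N : ℕ)

theorem parity [NeZero N] (h0 : 0 < half) (hN : N = 2 * half)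
    (hX1 : ((X : (ZMod 2)[X]) + 1) ^ N = X ^ N + 1)
    (hX2 : ((X : (ZMod 2)[X]) + 1) ^ half = X ^ half + 1)
    (a : ZMod N → ZMod 2)
    (hcorr : ∀ h : ZMod N, ∑ c : ZMod N, a c * a (c + h) = 0) :
    ∀ c : ZMod N, a c = a (c + (half : ZMod N)) := by
  have hN0 : 0 < N := by omega
  set α : ℕ → ZMod 2 := fun i => a (i : ZMod N) with hα
  set P : (ZMod 2)[X] := ∑ i ∈ range N, C (α i) * X ^ i with hP
  set Q : (ZMod 2)[X] := ∑ i ∈ range N, C (α i) * X ^ (N - i) with hQ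
  -- coefficients of P
  have coeffP : ∀ k, k < N → P.coeff k = α k := by
    intro k hk
    rw [hP, finset_sum_coeff]
    simp only [coeff_C_mul, coeff_X_pow]
    rw [Finset.sum_eq_single k]
    · simp
    · intro i _ hik; simp [Ne.symm hik]
    · intro h; exact absurd (mem_range.mpr hk) h
  have coeffPbig : ∀ k, N ≤ k → P.coeff k = 0 := by
    intro k hk
    rw [hP, finset_sum_coeff]
    apply Finset.sum_eq_zero
    intro i hi
    have : i ≠ k := by have := mem_range.mp hi; omega
    simp [coeff_C_mul, coeff_X_pow, Ne.symm this]
  have coeffQ : ∀ k, k < N → Q.coeff (N - k) = α k := by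
    intro k hk
    rw [hQ, finset_sum_coeff]
    simp only [coeff_C_mul, coeff_X_pow]
    rw [Finset.sum_eq_single k]
    · simp
    · intro i hi hik
      have hi' := mem_range.mp hi
      have : N - k ≠ N - i := by omega
      simp [this]
    · intro h; exact absurd (mem_range.mpr hk) h
  have hPdeg : P.degree < (N : ℕ) := by
    apply Polynomial.degree_lt_iff_coeff_zero _ _ |>.mpr
    intro m hm
    exact coeffPbig m (by exact_mod_cast hm)
  -- group algebra
  set u : AddMonoidAlgebra (ZMod 2) (ZMod N) :=
    AddMonoidAlgebra.single (1 : ZMod N) (1 : ZMod 2) with hu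
  set φ : (ZMod 2)[X] →ₐ[ZMod 2] AddMonoidAlgebra (ZMod 2) (ZMod N) := aeval u with hφ
  have hφmono : ∀ (r : ZMod 2) (n : ℕ),
      φ (C r * X ^ n) = AddMonoidAlgebra.single ((n : ZMod N)) r := by
    intro r n
    rw [map_mul, hφ, aeval_C, map_pow, aeval_X, hu, AddMonoidAlgebra.single_pow]
    have h1 : n • (1 : ZMod N) = (n : ZMod N) := by
      rw [nsmul_eq_mul, mul_one]
    rw [h1, one_pow]
    have h2 : algebraMap (ZMod 2) (AddMonoidAlgebra (ZMod 2) (ZMod N)) r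
        = AddMonoidAlgebra.single (0 : ZMod N) r := by
      rw [AddMonoidAlgebra.coe_algebraMap]
      simp
    rw [h2, AddMonoidAlgebra.single_mul_single, zero_add, mul_one]
  have hφP : φ P = ∑ c : ZMod N, AddMonoidAlgebra.single c (a c) := by
    rw [hP, map_sum, sum_zmod N (fun c => AddMonoidAlgebra.single c (a c))]
    apply Finset.sum_congr rfl
    intro i _
    exact hφmono (α i) i
  have hφQ : φ Q = ∑ c : ZMod N, AddMonoidAlgebra.single (-c) (a c) := by
    rw [hQ, map_sum, sum_zmod N (fun c => AddMonoidAlgebra.single (-c) (a c))]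
    apply Finset.sum_congr rfl
    intro i hi
    rw [hφmono (α i) (N - i)]
    congr 1
    have hi' : i ≤ N := le_of_lt (mem_range.mp hi)
    push_cast [Nat.cast_sub hi']
    simp
  have hPQ0 : φ P * φ Q = 0 := by
    rw [hφP, hφQ, Finset.sum_mul_sum]
    have hterm : ∀ c d : ZMod N,
        AddMonoidAlgebra.single c (a c) * AddMonoidAlgebra.single (-d) (a d)
        = AddMonoidAlgebra.single (c - d) (a c * a d) := by
      intro c d
      rw [AddMonoidAlgebra.single_mul_single, sub_eq_add_neg]
    refine AddMonoidAlgebra.coeff_injective (Finsupp.ext fun h => ?_)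
    rw [AddMonoidAlgebra.coeff_sum, Finsupp.finset_sum_apply]
    simp only [hterm]
    have hinner : ∀ c : ZMod N,
        (∑ d : ZMod N, AddMonoidAlgebra.single (c - d) (a c * a d)).coeff h
        = a c * a (c - h) := by
      intro c
      rw [AddMonoidAlgebra.coeff_sum, Finsupp.finset_sum_apply]
      rw [Finset.sum_eq_single (c - h)]
      · rw [AddMonoidAlgebra.coeff_single_apply, if_pos (by ring)]
      · intro d _ hd
        rw [AddMonoidAlgebra.coeff_single_apply, if_neg]
        intro he
        exact hd (by rw [← he]; ring)
      · intro hmem; exact absurd (mem_univ _) hmem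
    have hfin : ∑ c : ZMod N, a c * a (c - h) = 0 := by
      have := hcorr (-h)
      simpa [sub_eq_add_neg] using this
    rw [Finset.sum_congr rfl fun c _ => hinner c, hfin]
    simp
  -- division by X^N + 1
  have hmonic : (X ^ N + 1 : (ZMod 2)[X]).Monic := by
    rw [← C_1]
    exact monic_X_pow_add_C _ (by omega)
  set R : (ZMod 2)[X] := (P * Q) %ₘ (X ^ N + 1) with hR
  have hRsub : R = P * Q - (X ^ N + 1) * ((P * Q) /ₘ (X ^ N + 1)) :=
    modByMonic_eq_sub_mul_div _ _
  have hone : (1 : AddMonoidAlgebra (ZMod 2) (ZMod N))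
      = AddMonoidAlgebra.single 0 1 := AddMonoidAlgebra.one_def
  have hφXN : φ (X ^ N + 1) = 0 := by
    have h1 : φ (X ^ N + 1) = φ (C 1 * X ^ N) + 1 := by
      rw [map_add, map_one, C_1, one_mul]
    rw [h1, hφmono, ZMod.natCast_self, hone, ← AddMonoidAlgebra.single_add]
    have : (1 + 1 : ZMod 2) = 0 := rfl
    rw [this, AddMonoidAlgebra.single_zero]
  have hφR : φ R = 0 := by
    rw [hRsub, map_sub, map_mul, map_mul, hPQ0, hφXN, zero_mul, sub_zero]
  have hRdeg : R.degree < (N : ℕ) := by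
    have h1 := degree_modByMonic_lt (P * Q) hmonic
    have h2 : (X ^ N + 1 : (ZMod 2)[X]).degree = (N : ℕ) := by
      rw [← C_1]
      exact degree_X_pow_add_C (by omega) _
    rw [← h2]; exact h1
  have hR0 : R = 0 := by
    by_contra hR0
    have hdltn : R.natDegree < N := (natDegree_lt_iff_degree_lt hR0).mpr hRdeg
    have hsum := as_sum_range' R N hdltn
    have hφRsum : φ R = ∑ i ∈ range N, AddMonoidAlgebra.single (i : ZMod N) (R.coeff i) := by
      conv_lhs => rw [hsum]
      rw [map_sum]
      refine Finset.sum_congr rfl fun i _ => ?_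
      rw [← C_mul_X_pow_eq_monomial]
      exact hφmono _ _
    have hcoeff : ∀ k, k < N → R.coeff k = 0 := by
      intro k hk
      have h0 : (0 : AddMonoidAlgebra (ZMod 2) (ZMod N)).coeff ((k : ZMod N)) = 0 := rfl
      rw [← hφR, hφRsum, AddMonoidAlgebra.coeff_sum, Finsupp.finset_sum_apply] at h0
      rw [Finset.sum_eq_single k] at h0
      · rwa [AddMonoidAlgebra.coeff_single_apply, if_pos rfl] at h0
      · intro i hi hik
        rw [AddMonoidAlgebra.coeff_single_apply, if_neg]
        intro he
        exact hik (by
          have hi' := mem_range.mp hi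
          have := ZMod.val_cast_of_lt hi'
          have h2 := ZMod.val_cast_of_lt hk
          rw [← this, ← h2, he])
      · intro hmem; exact absurd (mem_range.mpr hk) hmem
    apply hR0
    ext k
    rcases lt_or_ge k N with hk | hk
    · rw [hcoeff k hk, coeff_zero]
    · rw [coeff_zero]
      exact coeff_eq_zero_of_degree_lt (lt_of_lt_of_le hRdeg (by exact_mod_cast hk))
  have hdvdN : ((X : (ZMod 2)[X]) + 1) ^ N ∣ P * Q := by
    rw [hX1]
    exact (modByMonic_eq_zero_iff_dvd hmonic).mp hR0
  -- char 2 facts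
  have hXC : (X - C 1 : (ZMod 2)[X]) = X + 1 := by
    have h11 : ((1 : (ZMod 2)[X]) + 1) = 0 := by
      rw [← C_1, ← C_add]
      have : (1 + 1 : ZMod 2) = 0 := rfl
      rw [this, C_0]
    rw [C_1, sub_eq_add_neg, neg_eq_of_add_eq_zero_left h11]
  by_cases hP0 : P = 0
  · -- then a is identically 0
    have hz : ∀ c : ZMod N, a c = 0 := by
      intro c
      have h1 := coeffP c.val (ZMod.val_lt c)
      rw [hP0, coeff_zero] at h1
      have h2 : ((c.val : ℕ) : ZMod N) = c := ZMod.natCast_rightInverse c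
      rw [hα] at h1
      simp only at h1
      rw [h2] at h1
      exact h1.symm
    intro c
    rw [hz, hz]
  · have hQ0 : Q ≠ 0 := by
      intro hQz
      apply hP0
      have hzz : ∀ k, k < N → α k = 0 := by
        intro k hk
        have := coeffQ k hk
        rw [hQz, coeff_zero] at this
        exact this.symm
      rw [hP]
      refine Finset.sum_eq_zero fun i hi => ?_
      rw [hzz i (mem_range.mp hi), C_0, zero_mul]
    have hPQne : P * Q ≠ 0 := mul_ne_zero hP0 hQ0
    set v := rootMultiplicity 1 P with hv
    set w := rootMultiplicity 1 Q with hw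
    have hvw : N ≤ v + w := by
      have h1 : N ≤ rootMultiplicity 1 (P * Q) := by
        rw [le_rootMultiplicity_iff hPQne, hXC]
        exact hdvdN
      rwa [rootMultiplicity_mul hPQne] at h1
    -- degree of Q
    have hQdegN : Q.natDegree ≤ N := by
      rw [hQ]
      refine natDegree_sum_le_of_forall_le _ _ fun i _ => ?_
      refine (natDegree_C_mul_le _ _).trans ?_
      rw [natDegree_X_pow]
      omega
    obtain ⟨W, hW⟩ : (X - C 1) ^ w ∣ Q := pow_rootMultiplicity_dvd Q 1
    have hWne : W ≠ 0 := by rintro rfl; rw [mul_zero] at hW; exact hQ0 hW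
    have hXCne : (X - C 1 : (ZMod 2)[X]) ^ w ≠ 0 :=
      pow_ne_zero _ (X_sub_C_ne_zero 1)
    have hdegQ : Q.natDegree = w + W.natDegree := by
      rw [hW, natDegree_mul hXCne hWne, natDegree_pow, natDegree_X_sub_C, mul_one]
    have hwN : w ≤ N := by omega
    have hreflQ : reflect N Q = (X - C 1) ^ w * reflect (N - w) W := by
      have hNeq : N = w + (N - w) := by omega
      calc reflect N Q = reflect (w + (N - w)) ((X - C 1) ^ w * W) := by
            rw [← hNeq, ← hW]
        _ = reflect w ((X - C 1) ^ w) * reflect (N - w) W := by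
            refine reflect_mul _ _ (le_of_eq ?_) (by omega)
            rw [natDegree_pow, natDegree_X_sub_C, mul_one]
        _ = (X - C 1) ^ w * reflect (N - w) W := by
            rw [hXC, reflect_X_add_one_pow]
    have hPrefl : reflect N Q = P := by
      rw [hQ, reflect_sum, hP]
      refine Finset.sum_congr rfl fun i hi => ?_
      have hi' := mem_range.mp hi
      rw [reflect_C_mul_X_pow, revAt_le (by omega : N - i ≤ N)]
      congr 2
      omega
    have hwv : w ≤ v := by
      rw [hv, le_rootMultiplicity_iff hP0]
      rw [← hPrefl, hreflQ]
      exact Dvd.intro _ rfl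
    have hhalfv : half ≤ v := by omega
    have hdvdhalf : (X ^ half + 1 : (ZMod 2)[X]) ∣ P := by
      rw [← hX2, ← hXC]
      exact dvd_trans (pow_dvd_pow _ hhalfv) (pow_rootMultiplicity_dvd P 1)
    obtain ⟨W2, hPW⟩ := hdvdhalf
    have hW2ne : W2 ≠ 0 := by rintro rfl; rw [mul_zero] at hPW; exact hP0 hPW
    have hPdegnat : P.natDegree < N := (natDegree_lt_iff_degree_lt hP0).mpr hPdeg
    have hmonic2 : (X ^ half + 1 : (ZMod 2)[X]).Monic := by
      rw [← C_1]
      exact monic_X_pow_add_C _ (by omega)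
    have hXhne : (X ^ half + 1 : (ZMod 2)[X]) ≠ 0 := hmonic2.ne_zero
    have hXhdeg : (X ^ half + 1 : (ZMod 2)[X]).natDegree = half := by
      rw [← C_1]; exact natDegree_X_pow_add_C
    have hnd : P.natDegree = half + W2.natDegree := by
      rw [hPW, natDegree_mul hXhne hW2ne, hXhdeg]
    have hW2deg : W2.natDegree < half := by omega
    have key : ∀ i, i + half < N → P.coeff i = P.coeff (i + half) := by
      intro i hi
      have hi' : i < half := by omega
      have hsplit : P = W2 * X ^ half + W2 := by rw [hPW]; ring
      have e1 : P.coeff i = W2.coeff i := by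
        rw [hsplit, coeff_add, coeff_mul_X_pow', if_neg (by omega), zero_add]
      have e2 : P.coeff (i + half) = W2.coeff i := by
        rw [hsplit, coeff_add, coeff_mul_X_pow', if_pos (by omega)]
        have : i + half - half = i := by omega
        rw [this, coeff_eq_zero_of_natDegree_lt (by omega : W2.natDegree < i + half), add_zero]
      rw [e1, e2]
    -- conclude
    intro c
    have hval : c.val < N := ZMod.val_lt c
    have hcc : ((c.val : ℕ) : ZMod N) = c := ZMod.natCast_rightInverse c
    have hhalf2 : ((half : ℕ) : ZMod N) + ((half : ℕ) : ZMod N) = 0 := by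
      rw [← Nat.cast_add]
      have : half + half = N := by omega
      rw [this, ZMod.natCast_self]
    by_cases hcv : c.val < half
    · have hk := key c.val (by omega)
      rw [coeffP _ hval, coeffP _ (by omega)] at hk
      have h1 : ((c.val + half : ℕ) : ZMod N) = c + ((half : ℕ) : ZMod N) := by
        rw [Nat.cast_add, hcc]
      have h2 : a c = α c.val := by rw [hα]; simp only; rw [hcc]
      have h3 : a (c + ((half : ℕ) : ZMod N)) = α (c.val + half) := by
        rw [hα]; simp only; rw [h1]
      rw [h2, h3]; exact hk
    · have hk := key (c.val - half) (by omega)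
      rw [coeffP _ (by omega), coeffP _ (by omega)] at hk
      have hsub : c.val - half + half = c.val := by omega
      rw [hsub] at hk
      have h1 : ((c.val - half : ℕ) : ZMod N) = c + ((half : ℕ) : ZMod N) := by
        have : ((c.val - half : ℕ) : ZMod N) + ((half : ℕ) : ZMod N) + ((half : ℕ) : ZMod N)
            = c + ((half : ℕ) : ZMod N) := by
          rw [← Nat.cast_add, hsub, hcc]
        rw [add_assoc, hhalf2, add_zero] at this
        rw [this]
      have h2 : a c = α c.val := by rw [hα]; simp only; rw [hcc]
      have h3 : a (c + ((half : ℕ) : ZMod N)) = α (c.val - half) := by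
        rw [hα]; simp only; rw [h1]
      rw [h2, h3]; exact hk.symm

end parity

lemma corr_eq (D : Finset (ZMod 96)) (m : ℕ) [NeZero m] (hm : m ∣ 96) (h : ZMod m) :
    ∑ c : ZMod m,
        ((D.filter fun x => ZMod.castHom hm (ZMod m) x = h + c).card *
          (D.filter fun x => ZMod.castHom hm (ZMod m) x = c).card)
      = ∑ g ∈ (univ : Finset (ZMod 96)).filter fun g => ZMod.castHom hm (ZMod m) g = h,
          ((D ×ˢ D).filter fun p => p.1 - p.2 = g).card := by
  set ψ := ZMod.castHom hm (ZMod m) with hψ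
  set s := (D ×ˢ D).filter fun p => ψ p.1 - ψ p.2 = h with hs
  have claim1 : s.card = ∑ c : ZMod m,
      ((D.filter fun x => ψ x = h + c).card * (D.filter fun x => ψ x = c).card) := by
    rw [Finset.card_eq_sum_card_fiberwise (f := fun p => ψ p.2) (t := univ)
      (fun x _ => mem_univ _)]
    refine Finset.sum_congr rfl fun c _ => ?_
    rw [hs, Finset.filter_filter]
    have hfe : ((D ×ˢ D).filter fun p => (ψ p.1 - ψ p.2 = h) ∧ ψ p.2 = c)
        = (D ×ˢ D).filter fun p => (fun z => ψ z = h + c) p.1 ∧ (fun z => ψ z = c) p.2 := by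
      refine Finset.filter_congr fun p _ => ?_
      constructor
      · rintro ⟨h1, h2⟩
        refine ⟨?_, h2⟩
        rw [← h1, h2]; ring
      · rintro ⟨h1, h2⟩
        refine ⟨?_, h2⟩
        rw [h1, h2]; ring
    rw [hfe, Finset.filter_product (fun z => ψ z = h + c) (fun z => ψ z = c),
      Finset.card_product]
  have claim2 : s.card = ∑ g ∈ (univ : Finset (ZMod 96)).filter fun g => ψ g = h,
      ((D ×ˢ D).filter fun p => p.1 - p.2 = g).card := by
    rw [Finset.card_eq_sum_card_fiberwise (f := fun p => p.1 - p.2)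
      (t := (univ : Finset (ZMod 96)).filter fun g => ψ g = h) ?_]
    · refine Finset.sum_congr rfl fun g hg => ?_
      have hgh : ψ g = h := (Finset.mem_filter.mp hg).2
      rw [hs, Finset.filter_filter]
      refine congrArg Finset.card (Finset.filter_congr fun p hp => ?_)
      constructor
      · rintro ⟨_, h2⟩; exact h2
      · intro h2
        refine ⟨?_, h2⟩
        rw [← map_sub, h2, hgh]
    · intro p hp
      rw [hs, Finset.mem_coe, Finset.mem_filter] at hp
      rw [Finset.mem_coe, Finset.mem_filter]
      exact ⟨mem_univ _, by rw [map_sub]; exact hp.2⟩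
  rw [← claim1, claim2]



lemma xpow2 (n : ℕ) : ((X : (ZMod 2)[X]) + 1) ^ (2 ^ n) = X ^ (2 ^ n) + 1 := by
  have h : ((X : (ZMod 2)[X]) + 1) ^ (2 ^ n) = X ^ (2 ^ n) + 1 ^ (2 ^ n) :=
    add_pow_char_pow X 1 2 n
  simpa using h

lemma cast2inj (x y : ℕ) (hx : x ≤ 1) (hy : y ≤ 1) (h : (x : ZMod 2) = y) : x = y := by
  interval_cases x <;> interval_cases y <;> simp_all

lemma diag_card (D : Finset (ZMod 96)) :
    ((D ×ˢ D).filter fun p => p.1 - p.2 = 0).card = D.card := by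
  have he : ((D ×ˢ D).filter fun p => p.1 - p.2 = 0) = D.image (fun a => (a, a)) := by
    ext ⟨x, y⟩
    simp only [Finset.mem_filter, Finset.mem_product, Finset.mem_image, sub_eq_zero,
      Prod.mk.injEq]
    constructor
    · rintro ⟨⟨hx, hy⟩, hxy⟩
      exact ⟨x, hx, rfl, hxy⟩
    · rintro ⟨a, ha, rfl, rfl⟩
      exact ⟨⟨ha, ha⟩, rfl⟩
  rw [he, Finset.card_image_of_injective _ (fun a b hab => (Prod.mk.injEq _ _ _ _).mp hab |>.1)]

lemma corr_val (D : Finset (ZMod 96)) (hcard : D.card = 20)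
    (hdiff : ∀ g : ZMod 96, g ≠ 0 → ((D ×ˢ D).filter fun p => p.1 - p.2 = g).card = 4)
    (m k : ℕ) [NeZero m] (hm : m ∣ 96)
    (hfib : ∀ h : ZMod m,
      ((univ : Finset (ZMod 96)).filter fun g => ZMod.castHom hm (ZMod m) g = h).card = k)
    (hk : 1 ≤ k) (h : ZMod m) :
    ∑ c : ZMod m,
        ((D.filter fun x => ZMod.castHom hm (ZMod m) x = h + c).card *
          (D.filter fun x => ZMod.castHom hm (ZMod m) x = c).card)
      = if h = 0 then 20 + 4 * (k - 1) else 4 * k := by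
  rw [corr_eq D m hm h]
  by_cases h0 : h = 0
  · subst h0
    rw [if_pos rfl]
    have hmem : (0 : ZMod 96) ∈ (univ : Finset (ZMod 96)).filter
        fun g => ZMod.castHom hm (ZMod m) g = 0 := by
      rw [Finset.mem_filter]
      exact ⟨mem_univ _, map_zero _⟩
    rw [← Finset.add_sum_erase _ _ hmem, diag_card D, hcard]
    congr 1
    have hconst : ∀ g ∈ ((univ : Finset (ZMod 96)).filter
        fun g => ZMod.castHom hm (ZMod m) g = 0).erase 0,
        ((D ×ˢ D).filter fun p => p.1 - p.2 = g).card = 4 := by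
      intro g hg
      exact hdiff g (Finset.mem_erase.mp hg).1
    rw [Finset.sum_congr rfl hconst, Finset.sum_const, Finset.card_erase_of_mem hmem, hfib]
    rw [smul_eq_mul, mul_comm]
  · rw [if_neg h0]
    have hconst : ∀ g ∈ (univ : Finset (ZMod 96)).filter
        fun g => ZMod.castHom hm (ZMod m) g = h,
        ((D ×ˢ D).filter fun p => p.1 - p.2 = g).card = 4 := by
      intro g hg
      refine hdiff g fun hgz => ?_
      apply h0
      rw [← (Finset.mem_filter.mp hg).2, hgz, map_zero]
    rw [Finset.sum_congr rfl hconst, Finset.sum_const, hfib, smul_eq_mul, mul_comm]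

lemma cnt_sum (D : Finset (ZMod 96)) (m : ℕ) [NeZero m] (hm : m ∣ 96) :
    ∑ c : ZMod m, (D.filter fun x => ZMod.castHom hm (ZMod m) x = c).card = D.card :=
  (Finset.card_eq_sum_card_fiberwise fun x _ => mem_univ _).symm


end DS96

open DS96

theorem no_diffset_in_cyclic_96 :
    ¬ ∃ D : Finset (ZMod 96), D.card = 20 ∧
      ∀ g : ZMod 96, g ≠ 0 →
        ((D ×ˢ D).filter fun p => p.1 - p.2 = g).card = 4 := by
  rintro ⟨D, hcard, hdiff⟩
  -- level 32
  have hfib32 : ∀ h : ZMod 32,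
      ((univ : Finset (ZMod 96)).filter
        fun g => ZMod.castHom (by norm_num : (32:ℕ) ∣ 96) (ZMod 32) g = h).card = 3 := by
    decide
  set f : ZMod 32 → ℕ :=
    fun c => (D.filter fun x => ZMod.castHom (by norm_num : (32:ℕ) ∣ 96) (ZMod 32) x = c).card
    with hfdef
  have hcorr32 : ∀ h : ZMod 32,
      ∑ c : ZMod 32, f c * f (c + h) = if h = 0 then 28 else 12 := by
    intro h
    have h1 := corr_val D hcard hdiff 32 3 (by norm_num) hfib32 (by norm_num) h
    have h2 : ∑ c : ZMod 32, f c * f (c + h) = ∑ c : ZMod 32, f (h + c) * f c :=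
      Finset.sum_congr rfl fun c _ => by rw [mul_comm, add_comm]
    rw [h2, hfdef]
    rw [h1]
  set a : ZMod 32 → ZMod 2 := fun c => ((f c : ℕ) : ZMod 2) with hadef
  have hA : ∀ h : ZMod 32, ∑ c : ZMod 32, a c * a (c + h) = 0 := by
    intro h
    have h1 : ((∑ c : ZMod 32, f c * f (c + h) : ℕ) : ZMod 2) = 0 := by
      rw [hcorr32 h]
      by_cases h0 : h = 0
      · rw [if_pos h0]; decide
      · rw [if_neg h0]; decide
    rw [Nat.cast_sum] at h1
    calc ∑ c : ZMod 32, a c * a (c + h)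
        = ∑ c : ZMod 32, ((f c * f (c + h) : ℕ) : ZMod 2) := by
          exact Finset.sum_congr rfl fun c _ => by rw [Nat.cast_mul]
      _ = 0 := h1
  have hpar32 : ∀ c : ZMod 32, a c = a (c + ((16 : ℕ) : ZMod 32)) := by
    refine parity 16 32 (by norm_num) (by norm_num) ?_ ?_ a hA
    · have := xpow2 5; norm_num at this; exact this
    · have := xpow2 4; norm_num at this; exact this
  -- level 16
  have hfib16 : ∀ h : ZMod 16,
      ((univ : Finset (ZMod 96)).filter
        fun g => ZMod.castHom (by norm_num : (16:ℕ) ∣ 96) (ZMod 16) g = h).card = 6 := by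
    decide
  set g : ZMod 16 → ℕ :=
    fun c => (D.filter fun x => ZMod.castHom (by norm_num : (16:ℕ) ∣ 96) (ZMod 16) x = c).card
    with hgdef
  have hcorr16 : ∀ h : ZMod 16,
      ∑ c : ZMod 16, g c * g (c + h) = if h = 0 then 40 else 24 := by
    intro h
    have h1 := corr_val D hcard hdiff 16 6 (by norm_num) hfib16 (by norm_num) h
    have h2 : ∑ c : ZMod 16, g c * g (c + h) = ∑ c : ZMod 16, g (h + c) * g c :=
      Finset.sum_congr rfl fun c _ => by rw [mul_comm, add_comm]
    rw [h2, hgdef]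
    rw [h1]
  have hgsum : ∑ c : ZMod 16, g c = 20 := by
    rw [hgdef]
    rw [cnt_sum D 16 (by norm_num), hcard]
  -- link levels
  have hcomp : ∀ x : ZMod 96,
      ZMod.castHom (by norm_num : (16:ℕ) ∣ 96) (ZMod 16) x
      = ZMod.castHom (by norm_num : (16:ℕ) ∣ 32) (ZMod 16)
          (ZMod.castHom (by norm_num : (32:ℕ) ∣ 96) (ZMod 32) x) := by
    decide
  have hfibp : ∀ c : ZMod 16,
      ((univ : Finset (ZMod 32)).filter
        fun b => ZMod.castHom (by norm_num : (16:ℕ) ∣ 32) (ZMod 16) b = c)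
      = {(c.val : ZMod 32), (c.val : ZMod 32) + 16} := by
    decide
  have hlne : ∀ c : ZMod 16, ((c.val : ZMod 32)) ≠ (c.val : ZMod 32) + 16 := by
    decide
  have hglink : ∀ c : ZMod 16, g c = f (c.val : ZMod 32) + f ((c.val : ZMod 32) + 16) := by
    intro c
    have h1 : g c = ∑ b ∈ (univ : Finset (ZMod 32)).filter
        (fun b => ZMod.castHom (by norm_num : (16:ℕ) ∣ 32) (ZMod 16) b = c), f b := by
      simp only [hgdef]
      rw [Finset.card_eq_sum_card_fiberwise
        (f := fun x => ZMod.castHom (by norm_num : (32:ℕ) ∣ 96) (ZMod 32) x)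
        (t := (univ : Finset (ZMod 32)).filter
          (fun b => ZMod.castHom (by norm_num : (16:ℕ) ∣ 32) (ZMod 16) b = c)) ?_]
      · refine Finset.sum_congr rfl fun b hb => ?_
        have hbc := (Finset.mem_filter.mp hb).2
        rw [Finset.filter_filter, hfdef]
        refine congrArg Finset.card (Finset.filter_congr fun x _ => ?_)
        constructor
        · rintro ⟨_, h2⟩; exact h2
        · intro h2
          refine ⟨?_, h2⟩
          rw [hcomp x, h2, hbc]
      · intro x hx
        rw [Finset.mem_coe, Finset.mem_filter] at hx ⊢
        exact ⟨mem_univ _, by rw [← hcomp x]; exact hx.2⟩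
    rw [h1, hfibp c, Finset.sum_pair (hlne c)]
  have h16cast : ((16 : ℕ) : ZMod 32) = 16 := by norm_num
  have heven : ∀ c : ZMod 16, 2 ∣ g c := by
    intro c
    have h1 : ((g c : ℕ) : ZMod 2) = 0 := by
      rw [hglink c, Nat.cast_add]
      have h2 := hpar32 (c.val : ZMod 32)
      rw [h16cast] at h2
      rw [hadef] at h2
      simp only at h2
      rw [← h2]
      have : (↑(f (c.val : ZMod 32)) : ZMod 2) + ↑(f (c.val : ZMod 32)) = 0 := by
        rw [← two_mul]
        have h2' : (2 : ZMod 2) = 0 := rfl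
        rw [h2', zero_mul]
      exact this
    exact (ZMod.natCast_eq_zero_iff _ 2).mp h1
  set e : ZMod 16 → ℕ := fun c => g c / 2 with hedef
  have hge : ∀ c : ZMod 16, g c = 2 * e c := by
    intro c
    rw [hedef]
    exact (Nat.mul_div_cancel' (heven c)).symm
  have hesum : ∑ c : ZMod 16, e c = 10 := by
    have h1 : ∑ c : ZMod 16, g c = ∑ c : ZMod 16, 2 * e c :=
      Finset.sum_congr rfl fun c _ => hge c
    rw [hgsum, ← Finset.mul_sum] at h1
    omega
  have hecorr : ∀ h : ZMod 16,
      ∑ c : ZMod 16, e c * e (c + h) = if h = 0 then 10 else 6 := by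
    intro h
    have h1 := hcorr16 h
    have h2 : ∑ c : ZMod 16, g c * g (c + h) = 4 * ∑ c : ZMod 16, e c * e (c + h) := by
      rw [Finset.mul_sum]
      refine Finset.sum_congr rfl fun c _ => ?_
      rw [hge c, hge (c + h)]
      ring
    rw [h2] at h1
    by_cases h0 : h = 0
    · rw [if_pos h0] at h1 ⊢; omega
    · rw [if_neg h0] at h1 ⊢; omega
  have hecorr0 : ∑ c : ZMod 16, e c * e c = 10 := by
    have := hecorr 0
    rw [if_pos rfl] at this
    calc ∑ c : ZMod 16, e c * e c = ∑ c : ZMod 16, e c * e (c + 0) := by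
          refine Finset.sum_congr rfl fun c _ => by rw [add_zero]
      _ = 10 := this
  have hele : ∀ c : ZMod 16, e c ≤ 1 := by
    have hle : ∀ c ∈ (univ : Finset (ZMod 16)), e c ≤ e c * e c := by
      intro c _
      rcases Nat.eq_zero_or_pos (e c) with h | h
      · rw [h]
      · calc e c = e c * 1 := by ring
          _ ≤ e c * e c := Nat.mul_le_mul_left _ h
    have heq : ∀ c ∈ (univ : Finset (ZMod 16)), e c = e c * e c := by
      refine (Finset.sum_eq_sum_iff_of_le hle).mp ?_
      rw [hesum, hecorr0]
    intro c
    have h1 := heq c (mem_univ c)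
    by_contra h2
    push_neg at h2
    have h3 : e c * 2 ≤ e c * e c := Nat.mul_le_mul_left _ h2
    omega
  set a' : ZMod 16 → ZMod 2 := fun c => ((e c : ℕ) : ZMod 2) with ha'def
  have hA' : ∀ h : ZMod 16, ∑ c : ZMod 16, a' c * a' (c + h) = 0 := by
    intro h
    have h1 : ((∑ c : ZMod 16, e c * e (c + h) : ℕ) : ZMod 2) = 0 := by
      rw [hecorr h]
      by_cases h0 : h = 0
      · rw [if_pos h0]; decide
      · rw [if_neg h0]; decide
    rw [Nat.cast_sum] at h1
    calc ∑ c : ZMod 16, a' c * a' (c + h)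
        = ∑ c : ZMod 16, ((e c * e (c + h) : ℕ) : ZMod 2) := by
          exact Finset.sum_congr rfl fun c _ => by rw [Nat.cast_mul]
      _ = 0 := h1
  have hpar16 : ∀ c : ZMod 16, a' c = a' (c + ((8 : ℕ) : ZMod 16)) := by
    refine parity 8 16 (by norm_num) (by norm_num) ?_ ?_ a' hA'
    · have := xpow2 4; norm_num at this; exact this
    · have := xpow2 3; norm_num at this; exact this
  have h8cast : ((8 : ℕ) : ZMod 16) = 8 := by norm_num
  have hper : ∀ c : ZMod 16, e c = e (c + 8) := by
    intro c
    have h1 := hpar16 c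
    rw [h8cast, ha'def] at h1
    simp only at h1
    exact cast2inj _ _ (hele c) (hele (c + 8)) h1
  have hfin := hecorr 8
  rw [if_neg (by decide : (8 : ZMod 16) ≠ 0)] at hfin
  have hfin2 : ∑ c : ZMod 16, e c * e (c + 8) = ∑ c : ZMod 16, e c * e c :=
    Finset.sum_congr rfl fun c _ => by rw [← hper c]
  rw [hfin2, hecorr0] at hfin
  omega
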